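/- Let V be a finite-dimensional complex Hilbert space and let S be a set of unitary and antiunitary operators acting irreducibly on V. If T is a linear operator on V such that S T S* = T for every unitary S in the set and S T S* = T* for every antiunitary S in the set, then T = λ·1 for some complex number λ. -/

import Mathlib

open scoped ComplexConjugate

/-- A unitary map on a complex inner product space, given as a plain function. -/
def IsUnitaryMap {V : Type*} [NormedAddCommGroup V] [InnerProductSpace ℂ V]
    (S : V → V) : Prop :=
  Function.Bijective S ∧ (∀ x y : V, S (x + y) = S x + S y) ∧
    (∀ (a : ℂ) (x : V), S (a • x) = a • S x) ∧
    ∀ x y : V, (inner ℂ (S x) (S y) : ℂ) = inner ℂ x y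

/-- An antiunitary map on a complex inner product space. -/
def IsAntiunitaryMap {V : Type*} [NormedAddCommGroup V] [InnerProductSpace ℂ V]
    (S : V → V) : Prop :=
  Function.Bijective S ∧ (∀ x y : V, S (x + y) = S x + S y) ∧
    (∀ (a : ℂ) (x : V), S (a • x) = conj a • S x) ∧
    ∀ x y : V, (inner ℂ (S x) (S y) : ℂ) = conj (inner ℂ x y : ℂ)

/-- A symmetric operator commuting with an irreducibly-acting set of unitary and
antiunitary maps is scalar. -/
lemma symmetric_commuting_is_scalar {V : Type*} [NormedAddCommGroup V]
    [InnerProductSpace ℂ V] [FiniteDimensional ℂ V]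
    (𝒮 : Set (V → V)) (hS : ∀ S ∈ 𝒮, IsUnitaryMap S ∨ IsAntiunitaryMap S)
    (hirr : ∀ W : Submodule ℂ V, (∀ S ∈ 𝒮, ∀ x ∈ W, S x ∈ W) → W = ⊥ ∨ W = ⊤)
    (C : V →ₗ[ℂ] V) (hsym : C.IsSymmetric)
    (hcomm : ∀ S ∈ 𝒮, ∀ x : V, S (C x) = C (S x)) :
    ∃ c : ℂ, ∀ x : V, C x = c • x := by
  rcases subsingleton_or_nontrivial V with h | h
  · exact ⟨0, fun x => Subsingleton.elim _ _⟩
  · obtain ⟨μ, hμ⟩ := Module.End.exists_eigenvalue (C : Module.End ℂ V)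
    have hreal : conj μ = μ := hsym.conj_eigenvalue_eq_self hμ
    set W := Module.End.eigenspace (C : Module.End ℂ V) μ with hW
    have hinv : ∀ S ∈ 𝒮, ∀ x ∈ W, S x ∈ W := by
      intro S hSmem x hx
      rw [hW, Module.End.mem_eigenspace_iff] at hx ⊢
      rcases hS S hSmem with hu | ha
      · rw [show C (S x) = S (C x) from (hcomm S hSmem x).symm, hx, hu.2.2.1]
      · rw [show C (S x) = S (C x) from (hcomm S hSmem x).symm, hx, ha.2.2.1, hreal]
    rcases hirr W hinv with hbot | htop
    · exact absurd hbot hμ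
    · refine ⟨μ, fun x => ?_⟩
      have : x ∈ W := htop ▸ Submodule.mem_top
      exact Module.End.mem_eigenspace_iff.mp this

theorem schur_lemma_general {V : Type*} [NormedAddCommGroup V]
    [InnerProductSpace ℂ V] [FiniteDimensional ℂ V]
    (𝒮 : Set (V → V)) (hS : ∀ S ∈ 𝒮, IsUnitaryMap S ∨ IsAntiunitaryMap S)
    (hirr : ∀ W : Submodule ℂ V, (∀ S ∈ 𝒮, ∀ x ∈ W, S x ∈ W) → W = ⊥ ∨ W = ⊤)
    (T : V →ₗ[ℂ] V)
    (hsymU : ∀ S ∈ 𝒮, IsUnitaryMap S → ∀ x : V, S (T x) = T (S x))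
    (hsymA : ∀ S ∈ 𝒮, IsAntiunitaryMap S → ∀ x : V,
      S (T x) = (LinearMap.adjoint T) (S x)) :
    ∃ c : ℂ, T = c • LinearMap.id := by
  set T' := LinearMap.adjoint T with hT'
  -- adjoint also commutes appropriately
  have hU' : ∀ S ∈ 𝒮, IsUnitaryMap S → ∀ x : V, S (T' x) = T' (S x) := by
    intro S hSmem hu x
    apply ext_inner_right ℂ
    intro v
    obtain ⟨z, rfl⟩ := hu.1.2 v
    calc (inner ℂ (S (T' x)) (S z) : ℂ) = inner ℂ (T' x) z := hu.2.2.2 _ _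
      _ = inner ℂ x (T z) := LinearMap.adjoint_inner_left T z x
      _ = inner ℂ (S x) (S (T z)) := (hu.2.2.2 _ _).symm
      _ = inner ℂ (S x) (T (S z)) := by rw [hsymU S hSmem hu z]
      _ = inner ℂ (T' (S x)) (S z) := (LinearMap.adjoint_inner_left T (S z) (S x)).symm
  have hA' : ∀ S ∈ 𝒮, IsAntiunitaryMap S → ∀ x : V, S (T' x) = T (S x) := by
    intro S hSmem ha x
    apply ext_inner_right ℂ
    intro v
    obtain ⟨z, rfl⟩ := ha.1.2 v
    calc (inner ℂ (S (T' x)) (S z) : ℂ) = conj (inner ℂ (T' x) z : ℂ) := ha.2.2.2 _ _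
      _ = conj (inner ℂ x (T z) : ℂ) := by rw [LinearMap.adjoint_inner_left]
      _ = inner ℂ (S x) (S (T z)) := (ha.2.2.2 _ _).symm
      _ = inner ℂ (S x) (T' (S z)) := by rw [hsymA S hSmem ha z]
      _ = inner ℂ (T (S x)) (S z) := LinearMap.adjoint_inner_right T (S x) (S z)
  -- subtraction is preserved by every S ∈ 𝒮
  have hsub : ∀ S ∈ 𝒮, ∀ u v : V, S (u - v) = S u - S v := by
    intro S hSmem u v
    have hneg : S (-v) = -S v := by
      rcases hS S hSmem with hu | ha
      · have := hu.2.2.1 (-1) v; simpa using this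
      · have := ha.2.2.1 (-1) v; simpa using this
    rcases hS S hSmem with hu | ha
    · rw [sub_eq_add_neg, hu.2.1, hneg, sub_eq_add_neg]
    · rw [sub_eq_add_neg, ha.2.1, hneg, sub_eq_add_neg]
  -- real and imaginary parts of T
  set A : V →ₗ[ℂ] V := (2⁻¹ : ℂ) • (T + T') with hA
  set B : V →ₗ[ℂ] V := (2⁻¹ * (-Complex.I)) • (T - T') with hB
  have hAx : ∀ x, A x = (2⁻¹ : ℂ) • (T x + T' x) := fun x => rfl
  have hBx : ∀ x, B x = (2⁻¹ * (-Complex.I)) • (T x - T' x) := fun x => rfl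
  have h1 : ∀ x y : V, (inner ℂ (T x) y : ℂ) = inner ℂ x (T' y) := fun x y =>
    (LinearMap.adjoint_inner_right T x y).symm
  have h2 : ∀ x y : V, (inner ℂ (T' x) y : ℂ) = inner ℂ x (T y) := fun x y =>
    LinearMap.adjoint_inner_left T y x
  have hAsym : A.IsSymmetric := by
    intro x y
    simp only [hAx, inner_smul_left, inner_smul_right, inner_add_left, inner_add_right,
      h1, h2, map_inv₀, Complex.conj_ofNat]
    ring
  have hBsym : B.IsSymmetric := by
    intro x y
    simp only [hBx, inner_smul_left, inner_smul_right, inner_sub_left, inner_sub_right,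
      h1, h2, map_inv₀, map_mul, map_neg, Complex.conj_ofNat, Complex.conj_I]
    ring
  have hAcomm : ∀ S ∈ 𝒮, ∀ x : V, S (A x) = A (S x) := by
    intro S hSmem x
    rcases hS S hSmem with hu | ha
    · rw [hAx, hu.2.2.1, hu.2.1, hsymU S hSmem hu, hU' S hSmem hu, hAx]
    · rw [hAx, ha.2.2.1, ha.2.1, hsymA S hSmem ha, hA' S hSmem ha, hAx]
      rw [show conj (2⁻¹ : ℂ) = (2⁻¹ : ℂ) by simp [map_inv₀, Complex.conj_ofNat]]
      rw [add_comm (T' (S x))]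
  have hBcomm : ∀ S ∈ 𝒮, ∀ x : V, S (B x) = B (S x) := by
    intro S hSmem x
    rcases hS S hSmem with hu | ha
    · rw [hBx, hu.2.2.1, hsub S hSmem, hsymU S hSmem hu, hU' S hSmem hu, hBx]
    · rw [hBx, ha.2.2.1, hsub S hSmem, hsymA S hSmem ha, hA' S hSmem ha, hBx]
      rw [show conj (2⁻¹ * (-Complex.I)) = (2⁻¹ * Complex.I : ℂ) from by
        simp [map_inv₀, Complex.conj_ofNat, Complex.conj_I]]
      module
  obtain ⟨a, hscA⟩ := symmetric_commuting_is_scalar 𝒮 hS hirr A hAsym hAcomm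
  obtain ⟨b, hscB⟩ := symmetric_commuting_is_scalar 𝒮 hS hirr B hBsym hBcomm
  refine ⟨a + Complex.I * b, ?_⟩
  apply LinearMap.ext
  intro x
  have hTx : T x = A x + Complex.I • B x := by
    rw [hAx, hBx, smul_smul, show Complex.I * (2⁻¹ * -Complex.I) = (2⁻¹ : ℂ) from by
      rw [show Complex.I * (2⁻¹ * -Complex.I) = 2⁻¹ * -(Complex.I * Complex.I) from by ring,
        Complex.I_mul_I]; ring]
    module
  rw [hTx, hscA, hscB, smul_smul]
  simp [add_smul, smul_smul]
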